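/- Multinomial is natural: for a channel c : X → D(Y), K ∈ ℕ, and distribution ω on X, pushing Multinomial[K](ω) forward along the multiset-extended channel M[K](c) gives the multinomial of the pushforward: M[K](c) ≫ Multinomial[K](ω) = Multinomial[K](c≫ω). -/

import Mathlib

open Finset

noncomputable def validity {X : Type*} [Fintype X] (ω p : X → ℝ) : ℝ := ∑ x, ω x * p x
noncomputable def updateD {X : Type*} [Fintype X] (ω p : X → ℝ) : X → ℝ :=
  fun x => ω x * p x / validity ω p
noncomputable def push {X Y : Type*} [Fintype X] (c : X → Y → ℝ) (ω : X → ℝ) : Y → ℝ :=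
  fun y => ∑ x, ω x * c x y
noncomputable def pull {X Y : Type*} [Fintype Y] (c : X → Y → ℝ) (q : Y → ℝ) : X → ℝ :=
  fun x => ∑ y, c x y * q y
noncomputable def dagger {X Y : Type*} [Fintype X] (c : X → Y → ℝ) (ω : X → ℝ) : Y → X → ℝ :=
  fun y x => ω x * c x y / push c ω y

def IsDist {X : Type*} [Fintype X] (ω : X → ℝ) : Prop :=
  (∀ x, 0 ≤ ω x) ∧ ∑ x, ω x = 1
def IsChannel {X Y : Type*} [Fintype Y] (c : X → Y → ℝ) : Prop :=
  ∀ x, IsDist (c x)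
def IsPred {X : Type*} (p : X → ℝ) : Prop := ∀ x, 0 ≤ p x ∧ p x ≤ 1

noncomputable def coefm {X : Type*} [Fintype X] [DecidableEq X] (K : ℕ) (φ : Sym X K) : ℝ :=
  (K.factorial : ℝ) / ∏ x, (((φ : Multiset X).count x).factorial : ℝ)
noncomputable def multinom {X : Type*} [Fintype X] [DecidableEq X] (K : ℕ) (ω : X → ℝ)
    (φ : Sym X K) : ℝ :=
  coefm K φ * ∏ x, ω x ^ ((φ : Multiset X).count x)
noncomputable def flrn {X : Type*} [DecidableEq X] (K : ℕ) (φ : Sym X K) : X → ℝ :=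
  fun x => ((φ : Multiset X).count x : ℝ) / K
def acc {X : Type*} {K : ℕ} (v : Fin K → X) : Sym X K :=
  ⟨Multiset.map v Finset.univ.val, by simp⟩
noncomputable def arr {X : Type*} [Fintype X] [DecidableEq X] {K : ℕ} (φ : Sym X K) :
    (Fin K → X) → ℝ :=
  fun v => if acc v = φ then 1 / coefm K φ else 0
noncomputable def Mchan {X Y : Type*} [Fintype X] [DecidableEq X] [Fintype Y] [DecidableEq Y]
    {K : ℕ} (c : X → Y → ℝ) : Sym X K → Sym Y K → ℝ :=
  fun φ ψ => ∑ v : Fin K → X, arr φ v *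
    ∑ w : Fin K → Y, (∏ i, c (v i) (w i)) * (if acc w = ψ then 1 else 0)
open Classical in
noncomputable def klE {Z : Type*} [Fintype Z] (ω ρ : Z → ℝ) : EReal :=
  if ∀ z, ω z ≠ 0 → ρ z ≠ 0 then ((∑ z, ω z * Real.log (ω z / ρ z) : ℝ) : EReal) else ⊤


lemma coefm_pos {X : Type*} [Fintype X] [DecidableEq X] (K : ℕ) (φ : Sym X K) :
    0 < coefm K φ := by
  apply div_pos
  · exact_mod_cast K.factorial_pos
  · exact Finset.prod_pos fun x _ => by exact_mod_cast Nat.factorial_pos _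

lemma prod_acc_count {X M : Type*} [CommMonoid M] [Fintype X] [DecidableEq X] {K : ℕ}
    (f : X → M) (v : Fin K → X) :
    ∏ x, f x ^ ((acc v : Multiset X).count x) = ∏ i, f (v i) := by
  have h1 : ∏ i, f (v i) = ((acc v : Multiset X).map f).prod := by
    show _ = (Multiset.map f (Multiset.map v Finset.univ.val)).prod
    rw [Multiset.map_map]
    rfl
  rw [h1, Finset.prod_multiset_map_count]
  refine (Finset.prod_subset (Finset.subset_univ _) ?_).symm
  intro x _ hx
  rw [Multiset.count_eq_zero_of_notMem (by simpa using hx), pow_zero]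
lemma acc_coe {X : Type*} {K : ℕ} (v : Fin K → X) :
    (acc v : Multiset X) = (List.ofFn v : List X) := by
  show Multiset.map v Finset.univ.val = _
  rw [Fin.univ_def]
  show Multiset.map v (List.finRange K : Multiset (Fin K)) = _
  rw [Multiset.map_coe, ← List.ofFn_eq_map]

lemma acc_cons {X : Type*} {K : ℕ} (x : X) (w : Fin K → X) :
    (acc (Fin.cons x w) : Multiset X) = x ::ₘ (acc w : Multiset X) := by
  rw [acc_coe, acc_coe, List.ofFn_succ]
  simp [Fin.cons]

lemma cons_eq_iff {X : Type*} [DecidableEq X] (x : X) (m s : Multiset X) :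
    x ::ₘ m = s ↔ x ∈ s ∧ m = s.erase x := by
  constructor
  · rintro rfl
    exact ⟨Multiset.mem_cons_self x m, (Multiset.erase_cons_head x m).symm⟩
  · rintro ⟨hx, rfl⟩
    exact Multiset.cons_erase hx

lemma sum_count_univ {X : Type*} [Fintype X] [DecidableEq X] (s : Multiset X) :
    ∑ x, s.count x = Multiset.card s := by
  rw [← Multiset.toFinset_sum_count_eq s]
  exact (Finset.sum_subset (Finset.subset_univ _)
    fun x _ hx => Multiset.count_eq_zero.2 (by simpa using hx)).symm

lemma key {X : Type*} [Fintype X] [DecidableEq X] :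
    ∀ (K : ℕ) (μ : X → ℝ) (ψ : Sym X K),
      ∑ w : Fin K → X, (if acc w = ψ then ∏ i, μ (w i) else 0) = multinom K μ ψ
  | 0, μ, ψ => by
    have hψ : (ψ : Multiset X) = 0 := Multiset.card_eq_zero.1 ψ.2
    have hacc : ∀ w : Fin 0 → X, acc w = ψ := fun w => Subtype.ext (by simp [acc_coe, hψ])
    rw [Fintype.sum_unique]
    simp [hacc, multinom, coefm, hψ]
  | (K+1), μ, ψ => by
    classical
    -- reindex by (x, w) ↦ Fin.cons x w
    rw [← (Fin.consEquiv (fun _ : Fin (K+1) => X)).sum_comp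
      (fun w => if acc w = ψ then ∏ i, μ (w i) else 0), Fintype.sum_prod_type]
    have step1 : ∀ (x : X) (w : Fin K → X),
        (if acc (Fin.consEquiv (fun _ : Fin (K+1) => X) (x, w)) = ψ then
          ∏ i, μ ((Fin.consEquiv (fun _ : Fin (K+1) => X) (x, w)) i) else 0)
        = if (x ∈ (ψ : Multiset X) ∧ (acc w : Multiset X) = (ψ : Multiset X).erase x)
            then μ x * ∏ i, μ (w i) else 0 := by
      intro x w
      have hc : (Fin.consEquiv (fun _ : Fin (K+1) => X) (x, w)) = Fin.cons x w := rfl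
      rw [hc]
      have hcond : (acc (Fin.cons x w) = ψ) ↔
          (x ∈ (ψ : Multiset X) ∧ (acc w : Multiset X) = (ψ : Multiset X).erase x) := by
        rw [← cons_eq_iff, ← acc_cons, Sym.coe_inj]
      rw [Fin.prod_univ_succ]
      simp only [Fin.cons_zero, Fin.cons_succ, hcond]
    simp only [step1]
    -- inner sum
    have step2 : ∀ x : X,
        (∑ w : Fin K → X, if (x ∈ (ψ : Multiset X) ∧ (acc w : Multiset X) = (ψ : Multiset X).erase x)
            then μ x * ∏ i, μ (w i) else 0)
        = ((ψ : Multiset X).count x : ℝ) / (K+1) * multinom (K+1) μ ψ := by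
      intro x
      by_cases hx : x ∈ (ψ : Multiset X)
      · have hcard : Multiset.card (ψ : Multiset X) = K + 1 := ψ.2
        set e : Sym X K := ⟨(ψ : Multiset X).erase x, by
          rw [Multiset.card_erase_of_mem hx, hcard]; rfl⟩ with he
        have hecoe : (e : Multiset X) = (ψ : Multiset X).erase x := rfl
        have hcnt : ∀ w : Fin K → X,
            ((acc w : Multiset X) = (ψ : Multiset X).erase x) ↔ acc w = e := by
          intro w; rw [← hecoe, Sym.coe_inj]
        have : (∑ w : Fin K → X, if (x ∈ (ψ : Multiset X) ∧ (acc w : Multiset X) = (ψ : Multiset X).erase x)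
            then μ x * ∏ i, μ (w i) else 0) = μ x * multinom K μ e := by
          rw [← key K μ e, Finset.mul_sum]
          refine Finset.sum_congr rfl fun w _ => ?_
          by_cases h : acc w = e
          · rw [if_pos ⟨hx, (hcnt w).2 h⟩, if_pos h]
          · rw [if_neg (fun hc => h ((hcnt w).1 hc.2)), if_neg h, mul_zero]
        rw [this]
        -- now the factorial algebra
        have hn : 0 < (ψ : Multiset X).count x := Multiset.count_pos.2 hx
        have hP : ∏ y, (((ψ : Multiset X)).count y).factorial
            = (ψ : Multiset X).count x * ∏ y, ((((ψ : Multiset X)).erase x).count y).factorial := by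
          rw [← Finset.mul_prod_erase univ _ (mem_univ x),
            ← Finset.mul_prod_erase univ
              (fun y => ((((ψ : Multiset X)).erase x).count y).factorial) (mem_univ x),
            Multiset.count_erase_self, ← mul_assoc, Nat.mul_factorial_pred hn.ne']
          congr 1
          refine Finset.prod_congr rfl fun y hy => ?_
          rw [Multiset.count_erase_of_ne (Finset.mem_erase.1 hy).1]
        have hB : μ x * ∏ y, μ y ^ (((ψ : Multiset X)).erase x).count y
            = ∏ y, μ y ^ ((ψ : Multiset X)).count y := by
          rw [← Finset.mul_prod_erase univ (fun y => μ y ^ ((ψ : Multiset X)).count y) (mem_univ x),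
            ← Finset.mul_prod_erase univ (fun y => μ y ^ (((ψ : Multiset X)).erase x).count y) (mem_univ x),
            Multiset.count_erase_self, ← mul_assoc, ← pow_succ', Nat.sub_add_cancel hn]
          congr 1
          refine Finset.prod_congr rfl fun y hy => ?_
          rw [Multiset.count_erase_of_ne (Finset.mem_erase.1 hy).1]
        have hCe : (0:ℝ) < ∏ y, (((((ψ : Multiset X)).erase x).count y).factorial : ℝ) :=
          Finset.prod_pos fun y _ => by exact_mod_cast Nat.factorial_pos _
        rw [multinom, multinom, coefm, coefm]
        simp only [hecoe]
        rw [← hB]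
        have hPe : ∏ y, ((((ψ : Multiset X)).count y).factorial : ℝ)
            = ((ψ : Multiset X).count x : ℝ) * ∏ y, (((((ψ : Multiset X)).erase x).count y).factorial : ℝ) := by
          exact_mod_cast congrArg (Nat.cast : ℕ → ℝ) hP
        rw [hPe, Nat.factorial_succ]
        have hnR : (0:ℝ) < ((ψ : Multiset X).count x : ℝ) := by exact_mod_cast hn
        field_simp
        push_cast
        ring
      · have h0 : (ψ : Multiset X).count x = 0 := Multiset.count_eq_zero.2 hx
        simp [hx, h0]
    rw [Finset.sum_congr rfl fun x _ => step2 x, ← Finset.sum_mul]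
    have : ∑ x, ((ψ : Multiset X).count x : ℝ) / (K+1) = 1 := by
      rw [← Finset.sum_div]
      have : ∑ x, ((ψ : Multiset X).count x : ℝ) = (K+1 : ℝ) := by
        have h2 := sum_count_univ (ψ : Multiset X)
        have hcard : Multiset.card (ψ : Multiset X) = K + 1 := ψ.2
        rw [hcard] at h2
        exact_mod_cast congrArg (Nat.cast : ℕ → ℝ) h2
      rw [this]; field_simp
    rw [this, one_mul]

theorem stmt17 {X Y : Type*} [Fintype X] [DecidableEq X] [Fintype Y] [DecidableEq Y]
    (K : ℕ) (c : X → Y → ℝ) (hc : IsChannel c) (ω : X → ℝ) (hω : IsDist ω) :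
    ∀ ψ : Sym Y K,
      ∑ φ : Sym X K, multinom K ω φ * Mchan c φ ψ = multinom K (push c ω) ψ := by
  intro ψ
  have expand : ∀ (φ : Sym X K) (v : Fin K → X),
      multinom K ω φ * arr φ v = if acc v = φ then ∏ i, ω (v i) else 0 := by
    intro φ v
    rw [multinom, arr]
    by_cases h : acc v = φ
    · rw [if_pos h, if_pos h, ← h, prod_acc_count ω v]
      have hpos : coefm K (acc v) ≠ 0 := ne_of_gt (coefm_pos K (acc v))
      field_simp
    · rw [if_neg h, if_neg h, mul_zero]
  have h1 : ∀ φ : Sym X K, multinom K ω φ * Mchan c φ ψ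
      = ∑ v : Fin K → X, (if acc v = φ then ∏ i, ω (v i) else 0) *
          (∑ w : Fin K → Y, (∏ i, c (v i) (w i)) * (if acc w = ψ then 1 else 0)) := by
    intro φ
    rw [Mchan, Finset.mul_sum]
    exact Finset.sum_congr rfl fun v _ => by rw [← mul_assoc, expand φ v]
  rw [Finset.sum_congr rfl fun φ _ => h1 φ, Finset.sum_comm]
  have h2 : ∀ v : Fin K → X,
      (∑ φ : Sym X K, (if acc v = φ then ∏ i, ω (v i) else 0) *
        (∑ w : Fin K → Y, (∏ i, c (v i) (w i)) * (if acc w = ψ then 1 else 0)))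
      = ∑ w : Fin K → Y, (if acc w = ψ then ∏ i, ω (v i) * c (v i) (w i) else 0) := by
    intro v
    have : ∀ φ : Sym X K, (if acc v = φ then ∏ i, ω (v i) else 0) *
        (∑ w : Fin K → Y, (∏ i, c (v i) (w i)) * (if acc w = ψ then 1 else 0))
        = if acc v = φ then (∏ i, ω (v i)) *
            (∑ w : Fin K → Y, (∏ i, c (v i) (w i)) * (if acc w = ψ then 1 else 0)) else 0 := by
      intro φ
      by_cases h : acc v = φ <;> simp [h]
    rw [Finset.sum_congr rfl fun φ _ => this φ, Finset.sum_ite_eq, if_pos (Finset.mem_univ _),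
      Finset.mul_sum]
    refine Finset.sum_congr rfl fun w _ => ?_
    by_cases h : acc w = ψ
    · rw [if_pos h, if_pos h, mul_one, Finset.prod_mul_distrib]
    · rw [if_neg h, if_neg h, mul_zero, mul_zero]
  rw [Finset.sum_congr rfl fun v _ => h2 v, Finset.sum_comm]
  have h3 : ∀ w : Fin K → Y,
      (∑ v : Fin K → X, if acc w = ψ then ∏ i, ω (v i) * c (v i) (w i) else 0)
      = if acc w = ψ then ∏ i, push c ω (w i) else 0 := by
    intro w
    by_cases h : acc w = ψ
    · simp only [if_pos h]
      rw [show ∏ i, push c ω (w i) = ∏ i, ∑ x, ω x * c x (w i) from rfl, Fintype.prod_sum]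
    · simp [h]
  rw [Finset.sum_congr rfl fun w _ => h3 w, key K (push c ω) ψ]
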